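/- Any simple rectifiable curve Γ ⊆ ℝⁿ of length L admits exactly two normalized constant-speed parametrizations: injective continuous maps f : [0,1] → ℝⁿ with range Γ such that f([0,t]) has arclength tL for all t ∈ [0,1]; the two such maps are related by reversal (f₂(t) = f₁(1−t)). -/

import Mathlib

open Set MeasureTheory ENNReal

/-- `f` is a normalized constant-speed parametrization of the simple rectifiable curve `Γ`. -/
def IsConstantSpeedParam {n : ℕ} (Γ : Set (EuclideanSpace ℝ (Fin n)))
    (f : ℝ → EuclideanSpace ℝ (Fin n)) : Prop :=
  ContinuousOn f (Icc 0 1) ∧ InjOn f (Icc 0 1) ∧ f '' Icc 0 1 = Γ ∧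
  ∀ t ∈ Icc (0 : ℝ) 1, μH[1] (f '' Icc 0 t) = ENNReal.ofReal t * μH[1] Γ

section AuxGeneral

open Filter Topology

/-- Inverse of a continuous injection on a compact set, continuous on the image. -/
lemma auxInv {X Y : Type*} [TopologicalSpace X] [TopologicalSpace Y] [T2Space Y]
    {K : Set X} (hK : IsCompact K) (hne : K.Nonempty) {F : X → Y}
    (hc : ContinuousOn F K) (hi : InjOn F K) :
    ∃ G : Y → X, (∀ x ∈ K, G (F x) = x) ∧ (∀ y ∈ F '' K, G y ∈ K ∧ F (G y) = y) ∧
      ContinuousOn G (F '' K) := by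
  haveI : CompactSpace K := isCompact_iff_compactSpace.mp hK
  let F' : K → F '' K := fun x => ⟨F x, mem_image_of_mem F x.2⟩
  have hcont : Continuous F' :=
    Continuous.subtype_mk (continuousOn_iff_continuous_restrict.mp hc) _
  have hbij : Function.Bijective F' := by
    constructor
    · intro a b hab
      exact Subtype.ext (hi a.2 b.2 (congrArg Subtype.val hab))
    · rintro ⟨y, x, hx, rfl⟩
      exact ⟨⟨x, hx⟩, rfl⟩
  let e : K ≃ (F '' K : Set Y) := Equiv.ofBijective F' hbij
  have hconte : Continuous (e : K → (F '' K : Set Y)) := hcont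
  let h : K ≃ₜ (F '' K : Set Y) := Continuous.homeoOfEquivCompactToT2 (f := e) hconte
  obtain ⟨x₀, hx₀⟩ := hne
  classical
  refine ⟨fun y => if hy : y ∈ F '' K then (h.symm ⟨y, hy⟩ : X) else x₀, ?_, ?_, ?_⟩
  · intro x hx
    have hy : F x ∈ F '' K := mem_image_of_mem F hx
    simp only [dif_pos hy]
    have : (⟨F x, hy⟩ : (F '' K : Set Y)) = h ⟨x, hx⟩ := rfl
    rw [this, Homeomorph.symm_apply_apply]
  · intro y hy
    simp only [dif_pos hy]
    constructor
    · exact (h.symm ⟨y, hy⟩).2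
    · have : h (h.symm ⟨y, hy⟩) = ⟨y, hy⟩ := h.apply_symm_apply _
      exact congrArg Subtype.val this
  · rw [continuousOn_iff_continuous_restrict]
    have : (fun (y : (F '' K : Set Y)) =>
        (if hy : (y : Y) ∈ F '' K then (h.symm ⟨y, hy⟩ : X) else x₀))
        = fun y => (h.symm y : X) := by
      funext y
      simp only [dif_pos y.2]
    have h2 : (F '' K).domRestrict (fun y => if hy : y ∈ F '' K then (h.symm ⟨y, hy⟩ : X) else x₀)
        = fun y => (h.symm y : X) := this
    rw [h2]
    exact continuous_subtype_val.comp h.symm.continuous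

variable {X : Type*} [MetricSpace X] [MeasurableSpace X] [BorelSpace X]

/-- Additivity of `μH[1]` along an injective curve. -/
lemma auxAdd {F : ℝ → X} {a b c : ℝ} (hab : a ≤ b) (hbc : b ≤ c)
    (hc : ContinuousOn F (Icc a c)) (hi : InjOn F (Icc a c)) :
    μH[1] (F '' Icc a c) = μH[1] (F '' Icc a b) + μH[1] (F '' Icc b c) := by
  haveI : NullSingletonClass (μH[1] : Measure X) :=
    MeasureTheory.Measure.nullSingletonClass_hausdorff (X := X) (by norm_num : (0:ℝ) < 1)
  have h1 : Icc a c = Icc a b ∪ Icc b c := (Icc_union_Icc_eq_Icc hab hbc).symm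
  have hsub1 : Icc a b ⊆ Icc a c := Icc_subset_Icc le_rfl hbc
  have hsub2 : Icc b c ⊆ Icc a c := Icc_subset_Icc hab le_rfl
  have h2 : F '' Icc a b ∩ F '' Icc b c = F '' (Icc a b ∩ Icc b c) :=
    (hi.image_inter hsub1 hsub2).symm
  have h3 : Icc a b ∩ Icc b c = {b} := by
    rw [Icc_inter_Icc, max_eq_right hab, min_eq_left hbc, Icc_self]
  have hm2 : MeasurableSet (F '' Icc b c) :=
    (isCompact_Icc.image_of_continuousOn (hc.mono hsub2)).isClosed.measurableSet
  have := measure_union_add_inter (μ := (μH[1] : Measure X)) (F '' Icc a b) hm2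
  rw [h2, h3, image_singleton, measure_singleton, add_zero] at this
  rw [h1, image_union, this]

/-- Lower bound for `μH[1]` of a connected curve piece. -/
lemma auxLB {F : ℝ → X} {a b : ℝ} (hab : a ≤ b) (hc : ContinuousOn F (Icc a b)) :
    ENNReal.ofReal (dist (F a) (F b)) ≤ μH[1] (F '' Icc a b) := by
  set ψ : X → ℝ := fun z => dist z (F a) with hψ
  have hlip : LipschitzWith 1 ψ := LipschitzWith.dist_left (F a)
  have h1 : μH[1] (ψ '' (F '' Icc a b)) ≤ μH[1] (F '' Icc a b) := by
    simpa using hlip.hausdorffMeasure_image_le zero_le_one (F '' Icc a b)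
  refine le_trans ?_ h1
  have hconn : IsPreconnected (ψ '' (F '' Icc a b)) :=
    (isPreconnected_Icc.image F hc).image ψ hlip.continuous.continuousOn
  have h0 : (0 : ℝ) ∈ ψ '' (F '' Icc a b) :=
    ⟨F a, mem_image_of_mem _ (left_mem_Icc.mpr hab), by simp [hψ]⟩
  have hd : dist (F b) (F a) ∈ ψ '' (F '' Icc a b) :=
    ⟨F b, mem_image_of_mem _ (right_mem_Icc.mpr hab), rfl⟩
  have hsub : Icc 0 (dist (F b) (F a)) ⊆ ψ '' (F '' Icc a b) := hconn.Icc_subset h0 hd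
  have hIcc : μH[1] (Icc 0 (dist (F b) (F a))) = ENNReal.ofReal (dist (F a) (F b)) := by
    rw [hausdorffMeasure_real, Real.volume_Icc, sub_zero, dist_comm]
  rw [← hIcc]
  exact measure_mono hsub

/-- Continuity of the arclength function of an injective rectifiable curve. -/
lemma auxCont {γ : ℝ → X} (hc : ContinuousOn γ (Icc 0 1)) (hi : InjOn γ (Icc 0 1))
    (hfin : μH[1] (γ '' Icc 0 1) ≠ ⊤) :
    ContinuousOn (fun t => (μH[1] (γ '' Icc 0 t)).toReal) (Icc 0 1) := by
  haveI : NullSingletonClass (μH[1] : Measure X) :=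
    MeasureTheory.Measure.nullSingletonClass_hausdorff (X := X) (by norm_num : (0:ℝ) < 1)
  rw [Metric.continuousOn_iff]
  intro t₀ ht₀ ε hε
  set T : ℕ → Set ℝ := fun k => Icc (t₀ - 1/(k+1)) (t₀ + 1/(k+1)) ∩ Icc 0 1 with hT
  have hTsub : ∀ k, T k ⊆ Icc 0 1 := fun k => inter_subset_right
  have hTcompact : ∀ k, IsCompact (T k) := fun k => isCompact_Icc.inter_right isClosed_Icc
  have hTm : ∀ k, NullMeasurableSet (γ '' T k) (μH[1]) := fun k =>
    (((hTcompact k).image_of_continuousOn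
      (hc.mono (hTsub k))).isClosed.measurableSet).nullMeasurableSet
  have hTanti : Antitone fun k => γ '' T k := by
    intro k m hkm
    apply image_mono
    apply inter_subset_inter_left
    have h1 : 1/((m:ℝ)+1) ≤ 1/((k:ℝ)+1) := by
      apply one_div_le_one_div_of_le (by positivity)
      exact_mod_cast by omega
    exact Icc_subset_Icc (by linarith) (by linarith)
  have h1 : (⋂ k, T k) = {t₀} := by
    apply Subset.antisymm
    · intro x hx
      simp only [mem_iInter] at hx
      have hb : ∀ k : ℕ, |x - t₀| ≤ 1/((k:ℝ)+1) := by
        intro k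
        have h2 := (hx k).1
        rw [mem_Icc] at h2
        rw [abs_le]
        constructor <;> linarith [h2.1, h2.2]
      have hx0 : x = t₀ := by
        by_contra h
        have habs : 0 < |x - t₀| := abs_pos.mpr (sub_ne_zero.mpr h)
        obtain ⟨k, hk⟩ := exists_nat_one_div_lt habs
        exact absurd (hb k) (by linarith)
      simp [hx0]
    · intro x hx
      simp only [mem_singleton_iff] at hx
      subst hx
      simp only [mem_iInter]
      intro k
      refine ⟨?_, ht₀⟩
      rw [mem_Icc]
      have : 0 < 1/((k:ℝ)+1) := by positivity
      constructor <;> linarith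
  have hInter : (⋂ k, γ '' T k) = {γ t₀} := by
    have hinj : InjOn γ (⋃ k, T k) := hi.mono (iUnion_subset hTsub)
    rw [← hinj.image_iInter_eq, h1, image_singleton]
  have hfin0 : μH[1] (γ '' T 0) ≠ ⊤ :=
    ne_top_of_le_ne_top hfin (measure_mono (image_mono (hTsub 0)))
  have htend : Tendsto (fun k => μH[1] (γ '' T k)) atTop (𝓝 0) := by
    have h2 := tendsto_measure_iInter_atTop hTm hTanti ⟨0, hfin0⟩
    rw [hInter] at h2
    simpa [measure_singleton, Function.comp_def] using h2
  obtain ⟨N, hN⟩ : ∃ N, μH[1] (γ '' T N) < ENNReal.ofReal ε :=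
    (htend.eventually_lt_const (ENNReal.ofReal_pos.mpr hε)).exists
  refine ⟨1/(N+1), by positivity, fun t ht hdist => ?_⟩
  have hdist' : |t - t₀| < 1/((N:ℝ)+1) := by rwa [Real.dist_eq] at hdist
  have habs := abs_lt.mp hdist'
  have key : ∀ a b : ℝ, a ∈ Icc 0 1 → b ∈ Icc 0 1 → a ≤ b → Icc a b ⊆ T N →
      dist (μH[1] (γ '' Icc 0 b)).toReal (μH[1] (γ '' Icc 0 a)).toReal < ε := by
    intro a b ha hb hab hsub
    have hadd := auxAdd ha.1 hab (hc.mono (Icc_subset_Icc le_rfl hb.2))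
      (hi.mono (Icc_subset_Icc le_rfl hb.2))
    have hfin1 : μH[1] (γ '' Icc 0 a) ≠ ⊤ :=
      ne_top_of_le_ne_top hfin (measure_mono (image_mono (Icc_subset_Icc le_rfl ha.2)))
    have hfin2 : μH[1] (γ '' Icc a b) ≠ ⊤ :=
      ne_top_of_le_ne_top hfin (measure_mono (image_mono (Icc_subset_Icc ha.1 hb.2)))
    have hlt : μH[1] (γ '' Icc a b) < ENNReal.ofReal ε :=
      lt_of_le_of_lt (measure_mono (image_mono hsub)) hN
    have hlt' : (μH[1] (γ '' Icc a b)).toReal < ε := by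
      rwa [ENNReal.lt_ofReal_iff_toReal_lt hfin2] at hlt
    rw [hadd, ENNReal.toReal_add hfin1 hfin2, Real.dist_eq, add_comm, add_sub_cancel_right,
      abs_of_nonneg ENNReal.toReal_nonneg]
    exact hlt'
  rcases le_total t t₀ with h | h
  · have hsubN : Icc t t₀ ⊆ T N := by
      intro x hx
      rw [mem_Icc] at hx
      refine ⟨?_, ⟨by linarith [ht.1], by linarith [ht₀.2]⟩⟩
      rw [mem_Icc]
      constructor <;> linarith
    have := key t t₀ ht ht₀ h hsubN
    rwa [dist_comm] at this
  · have hsubN : Icc t₀ t ⊆ T N := by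
      intro x hx
      rw [mem_Icc] at hx
      refine ⟨?_, ⟨by linarith [ht₀.1], by linarith [ht.2]⟩⟩
      rw [mem_Icc]
      constructor <;> linarith
    exact key t₀ t ht₀ ht h hsubN

end AuxGeneral

section AuxCurve

variable {n : ℕ}

/-- The measure of a tail piece of a constant-speed parametrization. -/
lemma auxTail {Γ : Set (EuclideanSpace ℝ (Fin n))} {f : ℝ → EuclideanSpace ℝ (Fin n)}
    (hf : IsConstantSpeedParam Γ f) (hfin : μH[1] Γ ≠ ⊤) {a : ℝ}
    (ha : a ∈ Icc (0:ℝ) 1) : μH[1] (f '' Icc a 1) = ENNReal.ofReal (1 - a) * μH[1] Γ := by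
  obtain ⟨hfc, hfi, hfimg, hfm⟩ := hf
  have hadd := auxAdd ha.1 ha.2 hfc hfi
  rw [hfimg, hfm a ha] at hadd
  have h2 : μH[1] Γ = ENNReal.ofReal a * μH[1] Γ + ENNReal.ofReal (1-a) * μH[1] Γ := by
    rw [← add_mul, ← ENNReal.ofReal_add ha.1 (by linarith [ha.2] : (0:ℝ) ≤ 1 - a)]
    norm_num
  nth_rewrite 1 [h2] at hadd
  exact ((ENNReal.add_right_inj (ENNReal.mul_ne_top ENNReal.ofReal_ne_top hfin)).mp hadd).symm

/-- The reversal of a constant-speed parametrization. -/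
lemma auxRev {Γ : Set (EuclideanSpace ℝ (Fin n))} {f : ℝ → EuclideanSpace ℝ (Fin n)}
    (hf : IsConstantSpeedParam Γ f) (hfin : μH[1] Γ ≠ ⊤) :
    IsConstantSpeedParam Γ (fun t => f (1 - t)) := by
  have hmap : MapsTo (fun t : ℝ => 1 - t) (Icc 0 1) (Icc (0:ℝ) 1) := fun x hx => by
    simp only [mem_Icc] at hx ⊢
    constructor <;> linarith [hx.1, hx.2]
  have hrev : ∀ t : ℝ, (fun u => f (1 - u)) '' Icc 0 t = f '' Icc (1-t) 1 := by
    intro t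
    rw [show (fun u => f (1 - u)) = f ∘ (fun u : ℝ => 1 - u) from rfl, image_comp,
      image_const_sub_Icc]
    norm_num
  refine ⟨hf.1.comp ((continuous_const.sub continuous_id).continuousOn) hmap, ?_, ?_, ?_⟩
  · intro x hx y hy hxy
    have h2 : 1 - x = 1 - y := hf.2.1 (hmap hx) (hmap hy) hxy
    linarith
  · rw [hrev 1]
    have h1 : (1:ℝ) - 1 = 0 := by norm_num
    rw [h1]
    exact hf.2.2.1
  · intro t ht
    rw [hrev t, auxTail hf hfin ⟨by linarith [ht.2], by linarith [ht.1]⟩]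
    norm_num

/-- Uniqueness up to reversal. -/
lemma auxKey {Γ : Set (EuclideanSpace ℝ (Fin n))} {f g : ℝ → EuclideanSpace ℝ (Fin n)}
    (hf : IsConstantSpeedParam Γ f) (hg : IsConstantSpeedParam Γ g)
    (hfin : μH[1] Γ ≠ ⊤) (hpos : μH[1] Γ ≠ 0) :
    EqOn g f (Icc 0 1) ∨ (∀ t ∈ Icc (0:ℝ) 1, g t = f (1 - t)) := by
  obtain ⟨hfc, hfi, hfimg, hfm⟩ := hf
  obtain ⟨hgc, hgi, hgimg, hgm⟩ := hg
  obtain ⟨G, hG1, hG2, hGcont⟩ := auxInv isCompact_Icc (nonempty_Icc.mpr zero_le_one) hfc hfi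
  rw [hfimg] at hG2 hGcont
  set φ : ℝ → ℝ := fun t => G (g t) with hφ
  have hgmem : ∀ t ∈ Icc (0:ℝ) 1, g t ∈ Γ := fun t ht => hgimg ▸ mem_image_of_mem g ht
  have hφmem : ∀ t ∈ Icc (0:ℝ) 1, φ t ∈ Icc (0:ℝ) 1 := fun t ht => (hG2 _ (hgmem t ht)).1
  have hfφ : ∀ t ∈ Icc (0:ℝ) 1, f (φ t) = g t := fun t ht => (hG2 _ (hgmem t ht)).2
  have hφcont : ContinuousOn φ (Icc 0 1) := hGcont.comp hgc (fun t ht => hgmem t ht)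
  have hφinj : InjOn φ (Icc 0 1) := by
    intro x hx y hy hxy
    apply hgi hx hy
    rw [← hfφ x hx, ← hfφ y hy, hxy]
  have hφsurj : ∀ u ∈ Icc (0:ℝ) 1, ∃ t ∈ Icc (0:ℝ) 1, φ t = u := by
    intro u hu
    have h3 : f u ∈ Γ := hfimg ▸ mem_image_of_mem f hu
    rw [← hgimg] at h3
    obtain ⟨t, ht, hgt⟩ := h3
    refine ⟨t, ht, ?_⟩
    rw [hφ]
    simp only
    rw [hgt]
    exact hG1 u hu
  have himg_meas : ∀ t ∈ Icc (0:ℝ) 1, g '' Icc 0 t = f '' (φ '' Icc 0 t) := by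
    intro t ht
    rw [image_image]
    exact (image_congr fun x hx => hfφ x ⟨hx.1, hx.2.trans ht.2⟩).symm
  rcases ContinuousOn.strictMonoOn_of_injOn_Icc' zero_le_one hφcont hφinj with hmono | hanti
  · left
    have hφ0 : φ 0 = 0 := by
      obtain ⟨t, ht, hφt⟩ := hφsurj 0 (left_mem_Icc.mpr zero_le_one)
      have h0m := (hφmem 0 (left_mem_Icc.mpr zero_le_one)).1
      rcases eq_or_lt_of_le ht.1 with h | h
      · rw [← h] at hφt
        exact hφt
      · have := hmono (left_mem_Icc.mpr zero_le_one) ht h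
        rw [hφt] at this
        linarith
    have hφid : ∀ t ∈ Icc (0:ℝ) 1, φ t = t := by
      intro t ht
      have himg : φ '' Icc 0 t = Icc 0 (φ t) := by
        apply Subset.antisymm
        · rintro _ ⟨x, hx, rfl⟩
          have hx1 : x ∈ Icc (0:ℝ) 1 := ⟨hx.1, hx.2.trans ht.2⟩
          exact ⟨hφ0 ▸ hmono.monotoneOn (left_mem_Icc.mpr zero_le_one) hx1 hx.1,
            hmono.monotoneOn hx1 ht hx.2⟩
        · intro u hu
          have hu1 : u ∈ Icc (0:ℝ) 1 := ⟨hu.1, hu.2.trans (hφmem t ht).2⟩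
          obtain ⟨x, hx, hφx⟩ := hφsurj u hu1
          have hxt : x ≤ t := by
            by_contra hc'
            push_neg at hc'
            have := hmono ht hx hc'
            rw [hφx] at this
            exact absurd hu.2 (not_le.mpr this)
          exact ⟨x, ⟨hx.1, hxt⟩, hφx⟩
      have hm1 := hgm t ht
      rw [himg_meas t ht, himg, hfm (φ t) (hφmem t ht)] at hm1
      have h2 := (ENNReal.mul_left_inj hpos hfin).mp hm1
      exact (ENNReal.ofReal_eq_ofReal_iff (hφmem t ht).1 ht.1).mp h2
    intro t ht
    rw [← hfφ t ht, hφid t ht]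
  · right
    have hφ0 : φ 0 = 1 := by
      obtain ⟨t, ht, hφt⟩ := hφsurj 1 (right_mem_Icc.mpr zero_le_one)
      have h0m := (hφmem 0 (left_mem_Icc.mpr zero_le_one)).2
      rcases eq_or_lt_of_le ht.1 with h | h
      · rw [← h] at hφt
        exact hφt
      · have := hanti (left_mem_Icc.mpr zero_le_one) ht h
        rw [hφt] at this
        linarith
    have hφid : ∀ t ∈ Icc (0:ℝ) 1, φ t = 1 - t := by
      intro t ht
      have himg : φ '' Icc 0 t = Icc (φ t) 1 := by
        apply Subset.antisymm
        · rintro _ ⟨x, hx, rfl⟩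
          have hx1 : x ∈ Icc (0:ℝ) 1 := ⟨hx.1, hx.2.trans ht.2⟩
          exact ⟨hanti.antitoneOn hx1 ht hx.2,
            hφ0 ▸ hanti.antitoneOn (left_mem_Icc.mpr zero_le_one) hx1 hx.1⟩
        · intro u hu
          have hu1 : u ∈ Icc (0:ℝ) 1 := ⟨(hφmem t ht).1.trans hu.1, hu.2⟩
          obtain ⟨x, hx, hφx⟩ := hφsurj u hu1
          have hxt : x ≤ t := by
            by_contra hc'
            push_neg at hc'
            have := hanti ht hx hc'
            rw [hφx] at this
            exact absurd hu.1 (not_le.mpr this)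
          exact ⟨x, ⟨hx.1, hxt⟩, hφx⟩
      have htail : μH[1] (f '' Icc (φ t) 1) = ENNReal.ofReal (1 - φ t) * μH[1] Γ :=
        auxTail ⟨hfc, hfi, hfimg, hfm⟩ hfin (hφmem t ht)
      have hm1 := hgm t ht
      rw [himg_meas t ht, himg, htail] at hm1
      have h2 := (ENNReal.mul_left_inj hpos hfin).mp hm1
      have h3 : 1 - φ t = t :=
        (ENNReal.ofReal_eq_ofReal_iff (by linarith [(hφmem t ht).2]) ht.1).mp h2
      linarith
    intro t ht
    rw [← hfφ t ht, hφid t ht]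

end AuxCurve

theorem exactly_two_constant_speed_params {n : ℕ}
    (γ : ℝ → EuclideanSpace ℝ (Fin n))
    (hc : ContinuousOn γ (Icc 0 1)) (hi : InjOn γ (Icc 0 1))
    (Γ : Set (EuclideanSpace ℝ (Fin n))) (hΓ : Γ = γ '' Icc 0 1)
    (hfin : μH[1] Γ < ⊤) (hpos : 0 < μH[1] Γ) :
    ∃ f₁ f₂ : ℝ → EuclideanSpace ℝ (Fin n),
      IsConstantSpeedParam Γ f₁ ∧ IsConstantSpeedParam Γ f₂ ∧
      (∀ t ∈ Icc (0 : ℝ) 1, f₂ t = f₁ (1 - t)) ∧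
      ¬ EqOn f₁ f₂ (Icc 0 1) ∧
      ∀ g : ℝ → EuclideanSpace ℝ (Fin n), IsConstantSpeedParam Γ g →
        EqOn g f₁ (Icc 0 1) ∨ EqOn g f₂ (Icc 0 1) := by
  haveI : NullSingletonClass (μH[1] : Measure (EuclideanSpace ℝ (Fin n))) :=
    MeasureTheory.Measure.nullSingletonClass_hausdorff _ (by norm_num : (0:ℝ) < 1)
  have hfinne : μH[1] Γ ≠ ⊤ := hfin.ne
  have hΓfin : μH[1] (γ '' Icc 0 1) ≠ ⊤ := hΓ ▸ hfinne
  have hLne : μH[1] Γ ≠ 0 := hpos.ne'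
  set Lr : ℝ := (μH[1] Γ).toReal with hLrdef
  have hLrpos : 0 < Lr := ENNReal.toReal_pos hLne hfinne
  have hLofReal : ENNReal.ofReal Lr = μH[1] Γ := ENNReal.ofReal_toReal hfinne
  set s : ℝ → ℝ := fun t => (μH[1] (γ '' Icc 0 t)).toReal with hsdef
  have hscont : ContinuousOn s (Icc 0 1) := auxCont hc hi hΓfin
  have hsfin : ∀ t ∈ Icc (0:ℝ) 1, μH[1] (γ '' Icc 0 t) ≠ ⊤ := fun t ht =>
    ne_top_of_le_ne_top hΓfin (measure_mono (image_mono (Icc_subset_Icc le_rfl ht.2)))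
  have hs0 : s 0 = 0 := by
    rw [hsdef]
    simp only [Icc_self, image_singleton, measure_singleton, ENNReal.toReal_zero]
  have hs1 : s 1 = Lr := by
    rw [hsdef, hLrdef, hΓ]
  have hsmono : StrictMonoOn s (Icc 0 1) := by
    intro a ha b hb hab
    have hinc : Icc a b ⊆ Icc (0:ℝ) 1 := Icc_subset_Icc ha.1 hb.2
    have hadd := auxAdd ha.1 hab.le (hc.mono (Icc_subset_Icc le_rfl hb.2))
      (hi.mono (Icc_subset_Icc le_rfl hb.2))
    have hlb := auxLB hab.le (hc.mono hinc)
    have hne : γ a ≠ γ b := fun h => hab.ne (hi ha hb h)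
    have hdpos : 0 < dist (γ a) (γ b) := dist_pos.mpr hne
    have hfab : μH[1] (γ '' Icc a b) ≠ ⊤ :=
      ne_top_of_le_ne_top hΓfin (measure_mono (image_mono hinc))
    have hppos : 0 < (μH[1] (γ '' Icc a b)).toReal :=
      ENNReal.toReal_pos (ne_of_gt (lt_of_lt_of_le (ENNReal.ofReal_pos.mpr hdpos) hlb)) hfab
    have heq : s b = s a + (μH[1] (γ '' Icc a b)).toReal := by
      rw [hsdef]
      simp only
      rw [hadd, ENNReal.toReal_add (hsfin a ha) hfab]
    rw [heq]
    linarith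
  set σ : ℝ → ℝ := fun t => s t / Lr with hσdef
  have hσcont : ContinuousOn σ (Icc 0 1) := hscont.div_const Lr
  have hσmono : StrictMonoOn σ (Icc 0 1) := by
    intro a ha b hb hab
    have := hsmono ha hb hab
    rw [hσdef]
    simp only
    gcongr
  have hσ0 : σ 0 = 0 := by rw [hσdef]; simp [hs0]
  have hσ1 : σ 1 = 1 := by rw [hσdef]; simp only; rw [hs1]; exact div_self hLrpos.ne'
  have hσinj : InjOn σ (Icc 0 1) := hσmono.injOn
  have hσimg : σ '' Icc 0 1 = Icc 0 1 := by
    apply Subset.antisymm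
    · rintro _ ⟨x, hx, rfl⟩
      exact ⟨hσ0 ▸ hσmono.monotoneOn (left_mem_Icc.mpr zero_le_one) hx hx.1,
        hσ1 ▸ hσmono.monotoneOn hx (right_mem_Icc.mpr zero_le_one) hx.2⟩
    · intro u hu
      have h2 := intermediate_value_Icc zero_le_one hσcont
      rw [hσ0, hσ1] at h2
      exact h2 hu
  obtain ⟨τ, hτ1, hτ2, hτcont⟩ :=
    auxInv isCompact_Icc (nonempty_Icc.mpr zero_le_one) hσcont hσinj
  rw [hσimg] at hτ2 hτcont
  have hτmem : ∀ u ∈ Icc (0:ℝ) 1, τ u ∈ Icc (0:ℝ) 1 := fun u hu => (hτ2 u hu).1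
  have hστ : ∀ u ∈ Icc (0:ℝ) 1, σ (τ u) = u := fun u hu => (hτ2 u hu).2
  have hτσ : ∀ x ∈ Icc (0:ℝ) 1, τ (σ x) = x := hτ1
  have hτmono : StrictMonoOn τ (Icc 0 1) := by
    intro u hu v hv huv
    rcases lt_trichotomy (τ u) (τ v) with h | h | h
    · exact h
    · exfalso
      have : σ (τ u) = σ (τ v) := by rw [h]
      rw [hστ u hu, hστ v hv] at this
      exact huv.ne this
    · exfalso
      have := hσmono (hτmem v hv) (hτmem u hu) h
      rw [hστ u hu, hστ v hv] at this
      exact absurd this (not_lt.mpr huv.le)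
  have hτ0 : τ 0 = 0 := by
    have := hτσ 0 (left_mem_Icc.mpr zero_le_one)
    rwa [hσ0] at this
  have hτlast : τ 1 = 1 := by
    have := hτσ 1 (right_mem_Icc.mpr zero_le_one)
    rwa [hσ1] at this
  have hτimg : ∀ t ∈ Icc (0:ℝ) 1, τ '' Icc 0 t = Icc 0 (τ t) := by
    intro t ht
    apply Subset.antisymm
    · rintro _ ⟨x, hx, rfl⟩
      have hx1 : x ∈ Icc (0:ℝ) 1 := ⟨hx.1, hx.2.trans ht.2⟩
      exact ⟨hτ0 ▸ hτmono.monotoneOn (left_mem_Icc.mpr zero_le_one) hx1 hx.1,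
        hτmono.monotoneOn hx1 ht hx.2⟩
    · intro y hy
      have hy1 : y ∈ Icc (0:ℝ) 1 := ⟨hy.1, hy.2.trans (hτmem t ht).2⟩
      refine ⟨σ y, ⟨?_, ?_⟩, hτσ y hy1⟩
      · rw [← hσ0]
        exact hσmono.monotoneOn (left_mem_Icc.mpr zero_le_one) hy1 hy.1
      · have := hσmono.monotoneOn hy1 (hτmem t ht) hy.2
        rwa [hστ t ht] at this
  have hf₁ : IsConstantSpeedParam Γ (fun u => γ (τ u)) := by
    refine ⟨hc.comp hτcont (fun u hu => hτmem u hu), ?_, ?_, ?_⟩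
    · intro x hx y hy hxy
      have h1 : τ x = τ y := hi (hτmem x hx) (hτmem y hy) hxy
      rw [← hστ x hx, ← hστ y hy, h1]
    · have h2 : (fun u => γ (τ u)) '' Icc 0 1 = γ '' (τ '' Icc 0 1) := (image_image γ τ _).symm
      rw [h2, hτimg 1 (right_mem_Icc.mpr zero_le_one), hτlast, hΓ]
    · intro t ht
      have h2 : (fun u => γ (τ u)) '' Icc 0 t = γ '' Icc 0 (τ t) := by
        rw [← image_image γ τ, hτimg t ht]
      rw [h2]
      have h3 : μH[1] (γ '' Icc 0 (τ t)) = ENNReal.ofReal (s (τ t)) :=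
        (ENNReal.ofReal_toReal (hsfin _ (hτmem t ht))).symm
      have h4 : s (τ t) = t * Lr := by
        have h5 := hστ t ht
        rw [hσdef] at h5
        simp only at h5
        rw [div_eq_iff hLrpos.ne'] at h5
        exact h5
      rw [h3, h4, ENNReal.ofReal_mul ht.1, hLofReal]
  have hf₂ : IsConstantSpeedParam Γ (fun u => γ (τ (1 - u))) := auxRev hf₁ hfinne
  refine ⟨fun u => γ (τ u), fun u => γ (τ (1 - u)), hf₁, hf₂, fun t _ => rfl, ?_, ?_⟩
  · intro h
    have h0 := h (left_mem_Icc.mpr zero_le_one)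
    simp only [sub_zero] at h0
    rw [hτ0, hτlast] at h0
    have := hi (left_mem_Icc.mpr zero_le_one) (right_mem_Icc.mpr zero_le_one) h0
    norm_num at this
  · intro g hg
    rcases auxKey hf₁ hg hfinne hLne with h | h
    · exact Or.inl h
    · exact Or.inr fun t ht => h t ht
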